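/- Let G be a compact graph and let v_1, v_2 be distinct vertices of G each of degree at least 3 lying on a common cycle C. Then v_1 and v_2 are adjacent in G. -/

import Mathlib

/-- `G` has no even cycles. -/
def SimpleGraph.NoEvenCycles {V : Type*} (G : SimpleGraph V) : Prop :=
  ∀ ⦃v : V⦄ (c : G.Walk v v), c.IsCycle → ¬ Even c.length

/-- The odd-cycle condition: every two cycles either share a vertex or are joined by an
edge of `G`. -/
def SimpleGraph.OddCycleCondition {V : Type*} (G : SimpleGraph V) : Prop :=
  ∀ ⦃u v : V⦄ (c₁ : G.Walk u u) (c₂ : G.Walk v v), c₁.IsCycle → c₂.IsCycle →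
    (∃ x, x ∈ c₁.support ∧ x ∈ c₂.support) ∨
    (∃ x y, x ∈ c₁.support ∧ y ∈ c₂.support ∧ G.Adj x y)

/-- A compact graph: a finite connected simple graph in which every vertex has degree
greater than one, with no even cycles, satisfying the odd-cycle condition. -/
def SimpleGraph.IsCompact {V : Type*} [Fintype V] (G : SimpleGraph V)
    [DecidableRel G.Adj] : Prop :=
  G.Connected ∧ (∀ v : V, 2 ≤ G.degree v) ∧ G.NoEvenCycles ∧ G.OddCycleCondition

namespace CompactAux

open SimpleGraph Walk

variable {V : Type*} {G : SimpleGraph V}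

/-- A path between `a` and `b` containing the edge `ab` has length one. -/
lemma length_eq_one_of_mem_edges {a b : V} {p : G.Walk a b} (hp : p.IsPath)
    (h : s(a, b) ∈ p.edges) : p.length = 1 := by
  induction p with
  | nil => simp at h
  | @cons a c b h' q ih =>
    rw [Walk.edges_cons, List.mem_cons] at h
    rcases h with h | h
    · rw [Sym2.eq_iff] at h
      rcases h with ⟨-, rfl⟩ | ⟨rfl, rfl⟩
      · have hq : q.IsPath := hp.of_cons
        rw [Walk.isPath_iff_eq_nil] at hq
        subst hq; simp
      · exact absurd rfl h'.ne
    · exact absurd (q.fst_mem_support_of_mem_edges h)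
        ((Walk.cons_isPath_iff _ _).mp hp).2

lemma eq_cons_nil_of_length_one {a b : V} {p : G.Walk a b} (h : p.length = 1) :
    ∃ h' : G.Adj a b, p = Walk.cons h' Walk.nil := by
  match p with
  | .nil => simp at h
  | .cons h' q =>
    match q with
    | .nil => exact ⟨h', rfl⟩
    | .cons _ _ => simp [Walk.length_cons] at h

/-- A path has at most one edge incident to its final endpoint. -/
lemma eq_of_mem_edges_end {a b x y : V} {p : G.Walk a b} (hp : p.IsPath)
    (hx : s(x, b) ∈ p.edges) (hy : s(y, b) ∈ p.edges) : x = y := by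
  induction p with
  | nil => simp at hx
  | @cons a c b h' q ih =>
    have hq : q.IsPath := hp.of_cons
    have hfst : ∀ z : V, s(z, b) = s(a, c) → z = a ∧ b = c := by
      intro z hz
      rw [Sym2.eq_iff] at hz
      rcases hz with ⟨rfl, rfl⟩ | ⟨rfl, rfl⟩
      · exact ⟨rfl, rfl⟩
      · exfalso
        rw [Walk.isPath_iff_eq_nil] at hp
        exact absurd hp (by simp)
    rw [Walk.edges_cons, List.mem_cons] at hx hy
    rcases hx with hx | hx <;> rcases hy with hy | hy
    · rw [(hfst x hx).1, (hfst y hy).1]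
    · exfalso
      obtain ⟨-, rfl⟩ := hfst x hx
      rw [Walk.isPath_iff_eq_nil] at hq; subst hq; simp at hy
    · exfalso
      obtain ⟨-, rfl⟩ := hfst y hy
      rw [Walk.isPath_iff_eq_nil] at hq; subst hq; simp at hx
    · exact ih hq hx hy

/-- Gluing two internally disjoint distinct paths between two vertices yields a cycle. -/
lemma glue_isCycle {a b : V} {p q : G.Walk a b} (hab : a ≠ b)
    (hp : p.IsPath) (hq : q.IsPath)
    (hdisj : ∀ x, x ∈ p.support → x ∈ q.support → x = a ∨ x = b) (hne : p ≠ q) :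
    (p.append q.reverse).IsCycle := by
  have hshared : ∀ e, e ∈ p.edges → e ∈ q.edges → False := by
    intro e hep heq
    induction e with
    | h x y =>
      have hx : x = a ∨ x = b := hdisj x (p.fst_mem_support_of_mem_edges hep)
        (q.fst_mem_support_of_mem_edges heq)
      have hy : y = a ∨ y = b := hdisj y (p.snd_mem_support_of_mem_edges hep)
        (q.snd_mem_support_of_mem_edges heq)
      have hxy : x ≠ y := by
        intro h; subst h
        exact absurd (p.adj_of_mem_edges hep) (G.irrefl)
      have heab : s(x, y) = s(a, b) := by
        rcases hx with rfl | rfl <;> rcases hy with rfl | rfl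
        · exact absurd rfl hxy
        · rfl
        · exact Sym2.eq_swap
        · exact absurd rfl hxy
      rw [heab] at hep heq
      obtain ⟨h₁, rfl⟩ := eq_cons_nil_of_length_one (length_eq_one_of_mem_edges hp hep)
      obtain ⟨h₂, rfl⟩ := eq_cons_nil_of_length_one (length_eq_one_of_mem_edges hq heq)
      exact hne rfl
  have hpt : p.support = a :: p.support.tail := p.support_eq_cons
  have hqrt : q.reverse.support = b :: q.reverse.support.tail := q.reverse.support_eq_cons
  have hptn : p.support.tail.Nodup ∧ a ∉ p.support.tail := by
    have := hp.support_nodup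
    rw [hpt, List.nodup_cons] at this
    exact ⟨this.2, this.1⟩
  have hqrn : q.reverse.support.tail.Nodup ∧ b ∉ q.reverse.support.tail := by
    have := hq.reverse.support_nodup
    rw [hqrt, List.nodup_cons] at this
    exact ⟨this.2, this.1⟩
  rw [Walk.isCycle_def]
  refine ⟨?_, ?_, ?_⟩
  · rw [Walk.isTrail_def, Walk.edges_append, List.nodup_append]
    refine ⟨hp.isTrail.edges_nodup, hq.reverse.isTrail.edges_nodup, ?_⟩
    intro e hep e' heq hee
    subst hee
    rw [Walk.edges_reverse, List.mem_reverse] at heq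
    exact hshared e hep heq
  · intro hnil
    have h0 : (p.append q.reverse).length = 0 := by rw [hnil]; rfl
    rw [Walk.length_append] at h0
    have : p.length = 0 := by omega
    exact hab (Walk.eq_of_length_eq_zero this)
  · rw [Walk.tail_support_append, List.nodup_append]
    refine ⟨hptn.1, hqrn.1, ?_⟩
    intro x hxp x' hxq hxx
    subst hxx
    have hx1 : x ∈ p.support := by rw [hpt]; exact List.mem_cons_of_mem _ hxp
    have hx2 : x ∈ q.support := by
      have : x ∈ q.reverse.support := by rw [hqrt]; exact List.mem_cons_of_mem _ hxq
      rwa [Walk.support_reverse, List.mem_reverse] at this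
    rcases hdisj x hx1 hx2 with rfl | rfl
    · exact hptn.2 hxp
    · exact hqrn.2 hxq

/-- Theta-subgraph lemma: a cycle `C` through `v` and `w` together with a third path
from `v` to `w`, internally disjoint from `C` and using an edge not in `C`, forces an
even cycle. -/
lemma theta [DecidableEq V] (hG : G.NoEvenCycles) {v w : V} (C : G.Walk v v)
    (hC : C.IsCycle) (hw : w ∈ C.support) (hwv : w ≠ v) (P : G.Walk v w)
    (hP : P.IsPath) (hint : ∀ x, x ∈ P.support → x ∈ C.support → x = v ∨ x = w)
    (hedge : ∃ e, e ∈ P.edges ∧ e ∉ C.edges) : False := by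
  set a : G.Walk v w := C.takeUntil w hw with ha
  set d : G.Walk w v := C.dropUntil w hw with hd
  have hspec : a.append d = C := C.take_spec hw
  have hkey : a.support.tail ++ d.support.tail = C.support.tail := by
    rw [← Walk.tail_support_append, hspec]
  have hnodup : (a.support.tail ++ d.support.tail).Nodup := by rw [hkey]; exact hC.2
  rw [List.nodup_append] at hnodup
  have hvd : v ∈ d.support.tail := by
    have := d.end_mem_support
    rw [d.support_eq_cons, List.mem_cons] at this
    rcases this with h | h
    · exact absurd h.symm hwv
    · exact h
  have hwa : w ∈ a.support.tail := by
    have := a.end_mem_support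
    rw [a.support_eq_cons, List.mem_cons] at this
    rcases this with h | h
    · exact absurd h hwv
    · exact h
  have hapath : a.IsPath := by
    apply Walk.IsPath.mk'
    rw [a.support_eq_cons, List.nodup_cons]
    exact ⟨fun hva => hnodup.2.2 v hva v hvd rfl, hnodup.1⟩
  have hdpath : d.IsPath := by
    apply Walk.IsPath.mk'
    rw [d.support_eq_cons, List.nodup_cons]
    exact ⟨fun hwd => hnodup.2.2 w hwa w hwd rfl, hnodup.2.1⟩
  obtain ⟨e, heP, heC⟩ := hedge
  set b : G.Walk v w := d.reverse with hb
  have hbpath : b.IsPath := hdpath.reverse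
  -- cycle P + b.reverse
  have hc₂ : (P.append b.reverse).IsCycle := by
    refine glue_isCycle hwv.symm hP hbpath ?_ ?_
    · intro x hxP hxb
      apply hint x hxP
      have : x ∈ d.support := by
        rw [hb, Walk.support_reverse, List.mem_reverse] at hxb
        exact hxb
      exact C.support_dropUntil_subset hw this
    · intro hPb
      apply heC
      have : e ∈ b.edges := by rw [← hPb]; exact heP
      rw [hb, Walk.edges_reverse, List.mem_reverse] at this
      exact C.edges_dropUntil_subset hw this
  -- cycle a + P.reverse
  have hc₃ : (a.append P.reverse).IsCycle := by
    refine glue_isCycle hwv.symm hapath hP ?_ ?_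
    · intro x hxa hxP
      exact hint x hxP (C.support_takeUntil_subset hw hxa)
    · intro haP
      apply heC
      have : e ∈ a.edges := by rw [haP]; exact heP
      exact C.edges_takeUntil_subset hw this
  have h1 : ¬ Even C.length := hG C hC
  have h2 : ¬ Even (P.append b.reverse).length := hG _ hc₂
  have h3 : ¬ Even (a.append P.reverse).length := hG _ hc₃
  have hlC : a.length + d.length = C.length := by
    rw [← hspec, Walk.length_append]
  rw [Nat.not_even_iff] at h1 h2 h3
  rw [Walk.length_append, Walk.length_reverse, hb, Walk.length_reverse] at h2
  rw [Walk.length_append, Walk.length_reverse] at h3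
  omega

/-- The set of vertices reachable from `x₁` avoiding `v` misses any cycle `C` through
`v`, provided the edge `v x₁` is not a chord or edge of `C` and `x₁ ∉ C`. -/
lemma region_avoids_cycle [DecidableEq V] (hG : G.NoEvenCycles) {v x₁ : V}
    (C : G.Walk v v) (hC : C.IsCycle) (hadj : G.Adj v x₁)
    (hedge : s(v, x₁) ∉ C.edges) (hx₁ : x₁ ∉ C.support) :
    ∀ (w : V) (q : G.Walk x₁ w), v ∉ q.support → w ∉ C.support := by
  have key : ∀ n (w : V) (q : G.Walk x₁ w), q.IsPath → q.length ≤ n →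
      v ∉ q.support → w ∈ C.support → False := by
    intro n
    induction n with
    | zero =>
      intro w q hq hl hv hw
      obtain rfl : x₁ = w := Walk.eq_of_length_eq_zero (Nat.le_zero.mp hl)
      exact hx₁ hw
    | succ n ih =>
      intro w q hq hl hvq hw
      have hwv : w ≠ v := fun h => hvq (h ▸ q.end_mem_support)
      by_cases hmid : ∃ z ∈ q.support, z ∈ C.support ∧ z ≠ w
      · obtain ⟨z, hzq, hzC, hzw⟩ := hmid
        refine ih z (q.takeUntil z hzq) (hq.takeUntil hzq) ?_
          (fun h => hvq (q.support_takeUntil_subset hzq h)) hzC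
        have h1 := congrArg Walk.length (q.take_spec hzq)
        rw [Walk.length_append] at h1
        have h2 : (q.dropUntil z hzq).length ≠ 0 :=
          fun h => hzw (Walk.eq_of_length_eq_zero h)
        omega
      · push_neg at hmid
        refine theta hG C hC hw hwv (Walk.cons hadj q) ((Walk.cons_isPath_iff _ _).mpr
          ⟨hq, hvq⟩) ?_ ⟨s(v, x₁), by simp, hedge⟩
        intro x hxP hxC
        rw [Walk.support_cons, List.mem_cons] at hxP
        rcases hxP with rfl | hxq
        · exact Or.inl rfl
        · exact Or.inr (hmid x hxq hxC)
  intro w q hvq hw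
  exact key q.bypass.length w q.bypass q.bypass_isPath le_rfl
    (fun h => hvq (q.support_bypass_subset h)) hw

/-- A vertex of degree at least 3 on a cycle has a neighbor outside the cycle, joined
by an edge not in the cycle. -/
lemma exists_third_neighbor [DecidableEq V] [Fintype V] [DecidableRel G.Adj]
    (hG : G.NoEvenCycles) {v : V} (C : G.Walk v v) (hC : C.IsCycle)
    (hdeg : 3 ≤ G.degree v) :
    ∃ x, G.Adj v x ∧ s(v, x) ∉ C.edges ∧ x ∉ C.support := by
  -- first: any neighbor x with s(v,x) ∉ C.edges is outside C.support
  have hout : ∀ x, G.Adj v x → s(v, x) ∉ C.edges → x ∉ C.support := by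
    intro x hx he hxC
    refine theta hG C hC hxC hx.ne' (Walk.cons hx Walk.nil) ?_ ?_ ⟨s(v, x), by simp, he⟩
    · rw [Walk.isPath_def]; simp [hx.ne]
    · intro z hz _
      simp only [Walk.support_cons, Walk.support_nil, List.mem_cons,
        List.mem_singleton] at hz
      tauto
  by_contra hcon
  push_neg at hcon
  have hall : ∀ x ∈ G.neighborFinset v, s(v, x) ∈ C.edges := by
    intro x hx
    rw [SimpleGraph.mem_neighborFinset] at hx
    by_contra he
    exact (hout x hx he) (hcon x hx he)

  -- destructure the cycle
  match C, hC, hall with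
  | Walk.nil, hC, _ => exact hC.ne_nil rfl
  | @Walk.cons _ _ _ y₀ _ h₀ p, hC, hall =>
    have hp : p.IsPath := ((Walk.cons_isCycle_iff p h₀).mp hC).1
    -- every neighbor is y₀ or the unique vertex z with s(z,v) ∈ p.edges
    by_cases hz : ∃ z, s(z, v) ∈ p.edges
    · obtain ⟨z, hzp⟩ := hz
      have hsub : G.neighborFinset v ⊆ {y₀, z} := by
        intro x hx
        have := hall x hx
        rw [Walk.edges_cons, List.mem_cons] at this
        rcases this with h | h
        · rw [Sym2.eq_iff] at h
          rcases h with ⟨-, rfl⟩ | ⟨rfl, -⟩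
          · simp
          · exact absurd rfl h₀.ne
        · rw [Sym2.eq_swap] at h
          have : x = z := eq_of_mem_edges_end hp h hzp
          simp [this]
      have : G.degree v ≤ 2 := by
        refine le_trans (Finset.card_le_card hsub) ?_
        exact le_trans (Finset.card_insert_le _ _) (by simp)
      omega
    · push_neg at hz
      have hsub : G.neighborFinset v ⊆ {y₀} := by
        intro x hx
        have := hall x hx
        rw [Walk.edges_cons, List.mem_cons] at this
        rcases this with h | h
        · rw [Sym2.eq_iff] at h
          rcases h with ⟨-, rfl⟩ | ⟨rfl, -⟩
          · simp
          · exact absurd rfl h₀.ne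
        · rw [Sym2.eq_swap] at h
          exact absurd h (hz x)
      have : G.degree v ≤ 1 := le_trans (Finset.card_le_card hsub) (by simp)
      omega

/-- In a graph of minimum degree 2, a "region" (set closed under adjacency except at
`v₁`, containing a neighbor `x₁` of `v₁`) contains a cycle. -/
lemma exists_cycle_region [DecidableEq V] [Fintype V] [DecidableRel G.Adj]
    (hdeg : ∀ v, 2 ≤ G.degree v) {v₁ x₁ : V} (S : Set V)
    (hclosed : ∀ x ∈ S, ∀ y, G.Adj x y → y ≠ v₁ → y ∈ S)
    (hx₁ : x₁ ∈ S) (hadj : G.Adj v₁ x₁) :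
    ∃ (y : V) (D : G.Walk y y), D.IsCycle ∧ ∀ z ∈ D.support, z ∈ S ∨ z = v₁ := by
  have main : ∀ n : ℕ,
      (∃ (x : V) (p : G.Walk x v₁), p.IsPath ∧ x ∈ S ∧
        (∀ z ∈ p.support, z ∈ S ∨ z = v₁) ∧ n ≤ p.length) ∨
      (∃ (y : V) (D : G.Walk y y), D.IsCycle ∧ ∀ z ∈ D.support, z ∈ S ∨ z = v₁) := by
    intro n
    induction n with
    | zero =>
      left
      refine ⟨x₁, Walk.cons hadj.symm Walk.nil, ?_, hx₁, ?_, by simp⟩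
      · rw [Walk.isPath_def]; simp [hadj.ne']
      · intro z hz
        simp only [Walk.support_cons, Walk.support_nil, List.mem_cons,
          List.mem_singleton] at hz
        rcases hz with rfl | rfl | h
        · exact Or.inl hx₁
        · exact Or.inr rfl
        · exact absurd h (by simp)
    | succ n ih =>
      rcases ih with ⟨x, p, hp, hxS, hsup, hlen⟩ | h
      · -- extend or find a cycle
        have hdx : 1 < (G.neighborFinset x).card := by
          have := hdeg x
          rw [← SimpleGraph.card_neighborFinset_eq_degree] at this
          omega
        obtain ⟨y, hyN, hyz⟩ := Finset.exists_mem_ne hdx (p.getVert 1)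
        rw [SimpleGraph.mem_neighborFinset] at hyN
        by_cases hyp : y ∈ p.support
        · -- cycle found
          right
          have hq : (p.takeUntil y hyp).IsPath := hp.takeUntil hyp
          have hedge : s(x, y) ∉ (p.takeUntil y hyp).edges := by
            intro hmem
            obtain ⟨h', hq1⟩ := eq_cons_nil_of_length_one
              (length_eq_one_of_mem_edges hq hmem)
            apply hyz
            have hps : p = Walk.cons h' (p.dropUntil y hyp) := by
              conv_lhs => rw [← p.take_spec hyp]
              rw [hq1]
              simp
            rw [hps]
            simp [Walk.getVert_cons_succ, Walk.getVert_zero]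
          refine ⟨x, Walk.cons hyN (p.takeUntil y hyp).reverse, ?_, ?_⟩
          · rw [Walk.cons_isCycle_iff]
            refine ⟨hq.reverse, ?_⟩
            rw [Walk.edges_reverse, List.mem_reverse]
            exact hedge
          · intro z hz
            rw [Walk.support_cons, List.mem_cons] at hz
            rcases hz with rfl | hz
            · exact hsup z p.start_mem_support
            · rw [Walk.support_reverse, List.mem_reverse] at hz
              exact hsup z (p.support_takeUntil_subset hyp hz)
        · -- extend
          left
          have hyv : y ≠ v₁ := by
            intro h; subst h
            exact hyp p.end_mem_support
          refine ⟨y, Walk.cons hyN.symm p, (Walk.cons_isPath_iff _ _).mpr ⟨hp, hyp⟩,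
            hclosed x hxS y hyN hyv, ?_, ?_⟩
          · intro z hz
            rw [Walk.support_cons, List.mem_cons] at hz
            rcases hz with rfl | hz
            · exact Or.inl (hclosed x hxS z hyN hyv)
            · exact hsup z hz
          · simp only [Walk.length_cons]; omega
      · exact Or.inr h
  rcases main (Fintype.card V) with ⟨x, p, hp, -, -, hlen⟩ | h
  · exact absurd hp.length_lt (not_lt.mpr hlen)
  · exact h

/-- Membership in the support of a closed walk is in its tail. -/
lemma mem_support_iff_mem_tail {u : V} {p : G.Walk u u} (hp : p ≠ Walk.nil) {x : V} :
    x ∈ p.support ↔ x ∈ p.support.tail := by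
  match p with
  | Walk.nil => exact absurd rfl hp
  | Walk.cons h q =>
    rw [Walk.support_cons, List.tail_cons, List.mem_cons]
    constructor
    · rintro (rfl | h)
      · exact q.end_mem_support
      · exact h
    · exact Or.inr

lemma mem_support_rotate [DecidableEq V] {u : V} {c : G.Walk u u} (hc : c.IsCycle)
    {v' : V} (hv : v' ∈ c.support) {x : V} :
    x ∈ (c.rotate v' hv).support ↔ x ∈ c.support := by
  rw [mem_support_iff_mem_tail (hc.rotate hv).1.2, mem_support_iff_mem_tail hc.1.2,
    (c.support_rotate _ hv).mem_iff]

end CompactAux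

open CompactAux SimpleGraph Walk in
/-- In a compact graph, two distinct vertices of degree at least 3 lying on a common
cycle are adjacent. -/
theorem stmt3 {V : Type*} [Fintype V] (G : SimpleGraph V) [DecidableRel G.Adj]
    (hG : G.IsCompact) {v₁ v₂ : V} (hne : v₁ ≠ v₂)
    (h₁ : 3 ≤ G.degree v₁) (h₂ : 3 ≤ G.degree v₂)
    {u : V} (c : G.Walk u u) (hc : c.IsCycle)
    (hv₁ : v₁ ∈ c.support) (hv₂ : v₂ ∈ c.support) :
    G.Adj v₁ v₂ := by
  classical
  by_contra hadj
  obtain ⟨hconn, hdeg, hnoeven, hocc⟩ := hG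
  set C₁ : G.Walk v₁ v₁ := c.rotate v₁ hv₁ with hC₁def
  have hC₁ : C₁.IsCycle := hc.rotate hv₁
  set C₂ : G.Walk v₂ v₂ := c.rotate v₂ hv₂ with hC₂def
  have hC₂ : C₂.IsCycle := hc.rotate hv₂
  have hmem₁ : ∀ x : V, x ∈ C₁.support ↔ x ∈ c.support := fun x => mem_support_rotate hc hv₁
  have hmem₂ : ∀ x : V, x ∈ C₂.support ↔ x ∈ c.support := fun x => mem_support_rotate hc hv₂
  have hv₂C₁ : v₂ ∈ C₁.support := (hmem₁ v₂).mpr hv₂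
  have hv₁C₂ : v₁ ∈ C₂.support := (hmem₂ v₁).mpr hv₁
  have hv₁C₁ : v₁ ∈ C₁.support := C₁.start_mem_support
  have hv₂C₂ : v₂ ∈ C₂.support := C₂.start_mem_support
  obtain ⟨x₁, hx₁adj, hx₁e, hx₁C⟩ := exists_third_neighbor hnoeven C₁ hC₁ h₁
  obtain ⟨x₂, hx₂adj, hx₂e, hx₂C⟩ := exists_third_neighbor hnoeven C₂ hC₂ h₂
  set S₁ : Set V := {w | ∃ q : G.Walk x₁ w, v₁ ∉ q.support} with hS₁def
  set S₂ : Set V := {w | ∃ q : G.Walk x₂ w, v₂ ∉ q.support} with hS₂def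
  have hx₁S : x₁ ∈ S₁ := ⟨Walk.nil, by simp [hx₁adj.ne]⟩
  have hx₂S : x₂ ∈ S₂ := ⟨Walk.nil, by simp [hx₂adj.ne]⟩
  have hclosed₁ : ∀ x ∈ S₁, ∀ y, G.Adj x y → y ≠ v₁ → y ∈ S₁ := by
    rintro x ⟨q, hq⟩ y hxy hyv
    exact ⟨q.concat hxy, by rw [Walk.support_concat]; simp [hq, Ne.symm hyv]⟩
  have hclosed₂ : ∀ x ∈ S₂, ∀ y, G.Adj x y → y ≠ v₂ → y ∈ S₂ := by
    rintro x ⟨q, hq⟩ y hxy hyv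
    exact ⟨q.concat hxy, by rw [Walk.support_concat]; simp [hq, Ne.symm hyv]⟩
  have havoid₁ : ∀ w ∈ S₁, w ∉ C₁.support := by
    rintro w ⟨q, hq⟩
    exact region_avoids_cycle hnoeven C₁ hC₁ hx₁adj hx₁e hx₁C w q hq
  have havoid₂ : ∀ w ∈ S₂, w ∉ C₂.support := by
    rintro w ⟨q, hq⟩
    exact region_avoids_cycle hnoeven C₂ hC₂ hx₂adj hx₂e hx₂C w q hq
  have havoid₂' : ∀ w ∈ S₂, w ∉ C₁.support := by
    intro w hw hwC
    exact havoid₂ w hw ((hmem₂ w).mpr ((hmem₁ w).mp hwC))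
  have hv₁S₂ : v₁ ∉ S₂ := fun h => havoid₂ v₁ h hv₁C₂
  have hv₂S₁ : v₂ ∉ S₁ := fun h => havoid₁ v₂ h hv₂C₁
  -- S₁ and S₂ are disjoint
  have hSdisj : ∀ z, z ∈ S₁ → z ∈ S₂ → False := by
    rintro z ⟨q₁, hq₁⟩ ⟨q₂, hq₂⟩
    have hq₁S : ∀ x ∈ q₁.support, x ∈ S₁ := by
      intro x hx
      exact ⟨q₁.takeUntil x hx, fun h => hq₁ (q₁.support_takeUntil_subset hx h)⟩
    have hq₂S : ∀ x ∈ q₂.support, x ∈ S₂ := by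
      intro x hx
      exact ⟨q₂.takeUntil x hx, fun h => hq₂ (q₂.support_takeUntil_subset hx h)⟩
    set W : G.Walk v₁ v₂ :=
      Walk.cons hx₁adj ((q₁.append q₂.reverse).concat hx₂adj.symm) with hWdef
    have hWsup : ∀ x ∈ W.support, x = v₁ ∨ x = v₂ ∨ x ∈ S₁ ∨ x ∈ S₂ := by
      intro x hx
      rw [hWdef, Walk.support_cons, List.mem_cons] at hx
      rcases hx with rfl | hx
      · exact Or.inl rfl
      · rw [Walk.support_concat, List.mem_append] at hx
        rcases hx with hx | hx
        · rw [Walk.support_append, List.mem_append] at hx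
          rcases hx with hx | hx
          · exact Or.inr (Or.inr (Or.inl (hq₁S x hx)))
          · have : x ∈ q₂.support := by
              have h2 : x ∈ q₂.reverse.support :=
                List.mem_of_mem_tail hx
              rwa [Walk.support_reverse, List.mem_reverse] at h2
            exact Or.inr (Or.inr (Or.inr (hq₂S x this)))
        · rw [List.mem_singleton] at hx
          exact Or.inr (Or.inl hx)
    set P : G.Walk v₁ v₂ := W.bypass with hPdef
    have hP : P.IsPath := W.bypass_isPath
    have hPsub : ∀ x ∈ P.support, x ∈ W.support := fun x hx => W.support_bypass_subset hx
    obtain ⟨y, h1e, P', hPeq⟩ := Walk.exists_eq_cons_of_ne hne P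
    have hyP : y ∈ P.support := by
      rw [hPeq, Walk.support_cons]
      exact List.mem_cons_of_mem _ P'.start_mem_support
    have hyv₁ : y ≠ v₁ := by
      intro h; subst h
      rw [hPeq] at hP
      exact ((Walk.cons_isPath_iff _ _).mp hP).2 P'.start_mem_support
    by_cases hyv₂ : y = v₂
    · exact hadj (hyv₂ ▸ h1e)
    · have hyS : y ∈ S₁ ∨ y ∈ S₂ := by
        rcases hWsup y (hPsub y hyP) with h | h | h | h
        · exact absurd h hyv₁
        · exact absurd h hyv₂
        · exact Or.inl h
        · exact Or.inr h
      have hyC : y ∉ C₁.support := by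
        rcases hyS with h | h
        · exact havoid₁ y h
        · exact havoid₂' y h
      refine theta hnoeven C₁ hC₁ hv₂C₁ hne.symm P hP ?_ ?_
      · intro x hxP hxC
        rcases hWsup x (hPsub x hxP) with h | h | h | h
        · exact Or.inl h
        · exact Or.inr h
        · exact absurd hxC (havoid₁ x h)
        · exact absurd hxC (havoid₂' x h)
      · refine ⟨s(v₁, y), ?_, ?_⟩
        · rw [hPeq, Walk.edges_cons]; exact List.mem_cons_self
        · intro hmem
          exact hyC (C₁.snd_mem_support_of_mem_edges hmem)
  obtain ⟨y₁, D₁, hD₁, hD₁sup⟩ := exists_cycle_region hdeg S₁ hclosed₁ hx₁S hx₁adj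
  obtain ⟨y₂, D₂, hD₂, hD₂sup⟩ := exists_cycle_region hdeg S₂ hclosed₂ hx₂S hx₂adj
  rcases hocc D₁ D₂ hD₁ hD₂ with ⟨x, hx1, hx2⟩ | ⟨x, y, hx, hy, hxy⟩
  · rcases hD₁sup x hx1 with hxS₁ | hxv₁ <;> rcases hD₂sup x hx2 with hxS₂ | hxv₂
    · exact hSdisj x hxS₁ hxS₂
    · exact hv₂S₁ (hxv₂ ▸ hxS₁)
    · exact hv₁S₂ (hxv₁ ▸ hxS₂)
    · exact hne (hxv₁.symm.trans hxv₂)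
  · rcases hD₁sup x hx with hxS₁ | hxv₁ <;> rcases hD₂sup y hy with hyS₂ | hyv₂
    · -- x ∈ S₁, y ∈ S₂
      have hyv₁ : y ≠ v₁ := fun h => hv₁S₂ (h ▸ hyS₂)
      exact hSdisj y (hclosed₁ x hxS₁ y hxy hyv₁) hyS₂
    · -- x ∈ S₁, y = v₂
      have hy1 : y ≠ v₁ := by rw [hyv₂]; exact hne.symm
      have hyS₁ := hclosed₁ x hxS₁ y hxy hy1
      rw [hyv₂] at hyS₁
      exact hv₂S₁ hyS₁
    · -- x = v₁, y ∈ S₂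
      have hx2 : x ≠ v₂ := by rw [hxv₁]; exact hne
      have hxS₂ := hclosed₂ y hyS₂ x hxy.symm hx2
      rw [hxv₁] at hxS₂
      exact hv₁S₂ hxS₂
    · exact hadj (hxv₁ ▸ hyv₂ ▸ hxy)
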